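/- Let 1 ≤ K ≤ d be integers and define φ_K(x) := ∑_{s=0}^{K−1} (K−s) C(d,s) x^{d−s} (1−x)^s. If K < d, then the second derivative of φ_K satisfies φ_K''(x) = d(d−1) C(d−2,K−1) x^{d−K−1} (1−x)^{K−1} for every real x; if K = d, then φ_K(x) = d x for every real x. Consequently φ_K is convex on the interval [0,1]. -/

import Mathlib

open Finset

lemma nat_id2 (e s : ℕ) (h : s < e) : (e - s) * e.choose s = e * (e-1).choose s := by
  have h1 : e.choose s = e.choose (e - s) := (Nat.choose_symm (le_of_lt h)).symm
  have h2 : e - s = (e - s - 1) + 1 := by omega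
  have h3 := Nat.add_one_mul_choose_eq (e-1) (e - s - 1)
  have h4 : (e-1).choose (e - s - 1) = (e-1).choose s := by
    rw [show e - s - 1 = (e-1) - s by omega]
    exact Nat.choose_symm (by omega)
  have h5 : Nat.succ (e-1) = e := by omega
  rw [show e - 1 + 1 = e by omega, h4] at h3
  rw [h1, h2, h3]; ring

lemma nat_id1 (e m : ℕ) (h : 1 ≤ e) : (m+1) * e.choose (m+1) = e * (e-1).choose m := by
  have h3 := Nat.add_one_mul_choose_eq (e-1) m
  rw [show e - 1 + 1 = e by omega] at h3
  rw [h3]; ring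

lemma psi_hasDeriv (e : ℕ) : ∀ (m : ℕ), m + 1 ≤ e → ∀ x : ℝ,
    HasDerivAt (fun y : ℝ => ∑ s ∈ range (m+1), (e.choose s : ℝ) * y ^ (e - s) * (1 - y) ^ s)
      ((e : ℝ) * ((e-1).choose m : ℝ) * x ^ (e - (m+1)) * (1 - x) ^ m) x := by
  intro m
  induction m with
  | zero =>
    intro h x
    simpa using hasDerivAt_pow e x
  | succ m ih =>
    intro h x
    have hm : m + 1 ≤ e := by omega
    have H1 := ih hm x
    have hy : HasDerivAt (fun y : ℝ => y ^ (e-(m+1))) (((e-(m+1) : ℕ) : ℝ) * x^(e-(m+1)-1)) x :=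
      hasDerivAt_pow _ x
    have hz : HasDerivAt (fun y : ℝ => (1-y)^(m+1)) (((m+1 : ℕ) : ℝ) * (1-x)^m * (-1)) x := by
      have := (hasDerivAt_pow (m+1) ((1:ℝ)-x)).comp x
        (((hasDerivAt_const x (1:ℝ)).sub (hasDerivAt_id x)))
      simpa [Function.comp_def] using this
    have hterm := (hy.mul hz).const_mul (e.choose (m+1) : ℝ)
    have H := H1.add hterm
    have Hfun : (fun y : ℝ => ∑ s ∈ range (m+1+1), (e.choose s : ℝ) * y ^ (e - s) * (1 - y) ^ s)
        = (fun y : ℝ => (∑ s ∈ range (m+1), (e.choose s : ℝ) * y ^ (e - s) * (1 - y) ^ s)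
            + (e.choose (m+1) : ℝ) * (y ^ (e-(m+1)) * (1-y)^(m+1))) := by
      funext y; rw [Finset.sum_range_succ]; ring
    rw [Hfun]
    refine H.congr_deriv ?_
    · -- derivative value equality
      have h1 : ((m+1 : ℕ) : ℝ) * (e.choose (m+1) : ℝ) = (e:ℝ) * ((e-1).choose m : ℝ) := by
        exact_mod_cast congrArg (Nat.cast : ℕ → ℝ) (nat_id1 e m (by omega))
      have h2 : (((e - (m+1)) : ℕ) : ℝ) * (e.choose (m+1) : ℝ)
          = (e:ℝ) * ((e-1).choose (m+1) : ℝ) := by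
        exact_mod_cast congrArg (Nat.cast : ℕ → ℝ) (nat_id2 e (m+1) (by omega))
      rw [show e - (m+1) = (e - m - 2) + 1 by omega] at h2
      rw [show e - (m+1+1) = e - m - 2 by omega, show e - (m+1) - 1 = e - m - 2 by omega,
        show e - (m+1) = (e - m - 2) + 1 by omega]
      rw [pow_succ (1-x) m, pow_succ x (e-m-2)]
      linear_combination (x^(e-m-2) * (1-x)^m * (1-x)) * h2 - (x^(e-m-2) * x * (1-x)^m) * h1

lemma phi_eq_sum (d : ℕ) : ∀ (K : ℕ) (x : ℝ),
    ∑ s ∈ range K, ((K:ℝ) - s) * (d.choose s : ℝ) * x^(d-s) * (1-x)^s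
    = ∑ j ∈ range K, ∑ s ∈ range (j+1), (d.choose s : ℝ) * x^(d-s) * (1-x)^s := by
  intro K
  induction K with
  | zero => simp
  | succ K ih =>
    intro x
    rw [Finset.sum_range_succ (f := fun j => ∑ s ∈ range (j+1), (d.choose s : ℝ) * x^(d-s) * (1-x)^s),
      ← ih x]
    have expand : ∀ s ∈ range (K+1),
        (((K+1:ℕ):ℝ) - s) * (d.choose s : ℝ) * x^(d-s) * (1-x)^s
        = ((K:ℝ) - s) * (d.choose s : ℝ) * x^(d-s) * (1-x)^s
          + (d.choose s : ℝ) * x^(d-s) * (1-x)^s := by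
      intro s _; push_cast; ring
    rw [Finset.sum_congr rfl expand, Finset.sum_add_distrib,
      Finset.sum_range_succ (f := fun s => ((K:ℝ) - s) * (d.choose s : ℝ) * x^(d-s) * (1-x)^s)]
    simp

lemma phi_hasDeriv (d K : ℕ) (hKd : K ≤ d) (x : ℝ) :
    HasDerivAt (fun y : ℝ => ∑ s ∈ range K, ((K:ℝ) - s) * (d.choose s : ℝ) * y^(d-s) * (1-y)^s)
      ((d:ℝ) * ∑ s ∈ range K, ((d-1).choose s : ℝ) * x^((d-1)-s) * (1-x)^s) x := by
  have hfun : (fun y : ℝ => ∑ s ∈ range K, ((K:ℝ) - s) * (d.choose s : ℝ) * y^(d-s) * (1-y)^s)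
      = (fun y : ℝ => ∑ j ∈ range K, ∑ s ∈ range (j+1), (d.choose s : ℝ) * y^(d-s) * (1-y)^s) :=
    funext fun y => phi_eq_sum d K y
  rw [hfun]
  have H : HasDerivAt
      (fun y : ℝ => ∑ j ∈ range K, ∑ s ∈ range (j+1), (d.choose s : ℝ) * y^(d-s) * (1-y)^s)
      (∑ j ∈ range K, (d:ℝ) * (((d-1).choose j : ℕ) : ℝ) * x^(d-(j+1)) * (1-x)^j) x :=
    HasDerivAt.fun_sum (fun j hj =>
      psi_hasDeriv d j (by have := Finset.mem_range.mp hj; omega) x)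
  refine H.congr_deriv ?_
  rw [Finset.mul_sum]
  refine Finset.sum_congr rfl fun j _ => ?_
  rw [show d - (j+1) = (d-1) - j by omega]
  ring

lemma phi_d_lin (d : ℕ) (hd : 1 ≤ d) (x : ℝ) :
    ∑ s ∈ range d, ((d:ℝ) - s) * (d.choose s : ℝ) * x^(d-s) * (1-x)^s = (d:ℝ) * x := by
  have key : ∑ s ∈ range d, ((d-1).choose s : ℝ) * x^(d-1-s) * (1-x)^s = 1 := by
    have h := add_pow (1-x) x (d-1)
    rw [show d - 1 + 1 = d by omega] at h
    simp only [sub_add_cancel, one_pow] at h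
    calc ∑ s ∈ range d, ((d-1).choose s : ℝ) * x^(d-1-s) * (1-x)^s
        = ∑ s ∈ range d, (1-x)^s * x^(d-1-s) * ((d-1).choose s : ℝ) :=
          Finset.sum_congr rfl fun s _ => by ring
      _ = 1 := h.symm
  have expand : ∀ s ∈ range d,
      ((d:ℝ) - s) * (d.choose s : ℝ) * x^(d-s) * (1-x)^s
      = ((d:ℝ) * x) * (((d-1).choose s : ℝ) * x^(d-1-s) * (1-x)^s) := by
    intro s hs
    have hs' : s < d := Finset.mem_range.mp hs
    have hcoef : ((d:ℝ) - s) * (d.choose s : ℝ) = (d:ℝ) * ((d-1).choose s : ℝ) := by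
      have h1 : ((d:ℝ) - s) = ((d - s : ℕ) : ℝ) := by
        push_cast [Nat.cast_sub (le_of_lt hs')]; ring
      rw [h1]
      exact_mod_cast congrArg (Nat.cast : ℕ → ℝ) (nat_id2 d s hs')
    rw [show d - s = (d - 1 - s) + 1 by omega, pow_succ]
    rw [mul_comm (((d:ℝ) - s)) _] at hcoef ⊢
    calc (d.choose s : ℝ) * ((d:ℝ) - s) * (x^(d-1-s) * x) * (1-x)^s
        = ((d.choose s : ℝ) * ((d:ℝ) - s)) * (x^(d-1-s) * x * (1-x)^s) := by ring
      _ = ((d:ℝ) * ((d-1).choose s : ℝ)) * (x^(d-1-s) * x * (1-x)^s) := by rw [hcoef]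
      _ = ((d:ℝ) * x) * (((d-1).choose s : ℝ) * x^(d-1-s) * (1-x)^s) := by ring
  rw [Finset.sum_congr rfl expand, ← Finset.mul_sum, key, mul_one]

lemma phi_deriv2 (d K : ℕ) (hK : 1 ≤ K) (hKd : K < d) (x : ℝ) :
    HasDerivAt (fun y : ℝ => (d:ℝ) * ∑ s ∈ range K, ((d-1).choose s : ℝ) * y^((d-1)-s) * (1-y)^s)
      ((d:ℝ) * ((d:ℝ) - 1) * ((d-2).choose (K-1) : ℝ) * x^(d-K-1) * (1-x)^(K-1)) x := by
  have H := (psi_hasDeriv (d-1) (K-1) (by omega) x).const_mul (d:ℝ)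
  rw [show K - 1 + 1 = K by omega] at H
  refine H.congr_deriv ?_
  rw [show d - 1 - 1 = d - 2 by omega, show d - 1 - K = d - K - 1 by omega,
    Nat.cast_sub (by omega : 1 ≤ d), Nat.cast_one]
  ring

/-- Second derivative of `φ_K(x) = ∑_{s=0}^{K−1} (K−s) C(d,s) x^{d−s} (1−x)^s`:
if `K < d` it equals `d(d−1) C(d−2,K−1) x^{d−K−1} (1−x)^{K−1}`, and if `K = d`
then `φ_K(x) = d x`. Consequently `φ_K` is convex on `[0,1]`. -/
theorem stmt18 (K d : ℕ) (hK : 1 ≤ K) (hKd : K ≤ d) :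
    ((K < d) → ∀ x : ℝ,
      deriv (deriv (fun y : ℝ => ∑ s ∈ Finset.range K,
          ((K : ℝ) - s) * (d.choose s : ℝ) * y ^ (d - s) * (1 - y) ^ s)) x =
        (d : ℝ) * ((d : ℝ) - 1) * ((d - 2).choose (K - 1) : ℝ) *
          x ^ (d - K - 1) * (1 - x) ^ (K - 1)) ∧
    ((K = d) → ∀ x : ℝ,
      (∑ s ∈ Finset.range K,
          ((K : ℝ) - s) * (d.choose s : ℝ) * x ^ (d - s) * (1 - x) ^ s) = (d : ℝ) * x) ∧
    ConvexOn ℝ (Set.Icc (0 : ℝ) 1)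
      (fun y : ℝ => ∑ s ∈ Finset.range K,
        ((K : ℝ) - s) * (d.choose s : ℝ) * y ^ (d - s) * (1 - y) ^ s) := by
  have hd1 : deriv (fun y : ℝ => ∑ s ∈ range K,
      ((K : ℝ) - s) * (d.choose s : ℝ) * y ^ (d - s) * (1 - y) ^ s)
      = fun z : ℝ => (d:ℝ) * ∑ s ∈ range K, ((d-1).choose s : ℝ) * z^((d-1)-s) * (1-z)^s :=
    funext fun z => (phi_hasDeriv d K hKd z).deriv
  refine ⟨?_, ?_, ?_⟩
  · intro hlt x
    rw [hd1]
    exact (phi_deriv2 d K hK hlt x).deriv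
  · intro heq x
    subst heq
    exact phi_d_lin K hK x
  · by_cases hcase : K = d
    · subst hcase
      have hfun : (fun y : ℝ => ∑ s ∈ range K,
          ((K : ℝ) - s) * (K.choose s : ℝ) * y ^ (K - s) * (1 - y) ^ s)
          = fun y : ℝ => (K:ℝ) * y := funext fun y => phi_d_lin K hK y
      rw [hfun]
      exact ⟨convex_Icc 0 1, fun a _ b _ μ ν hμ hν hmn => by
        simp only [smul_eq_mul]; exact le_of_eq (by ring)⟩
    · have hlt : K < d := lt_of_le_of_ne hKd hcase
      apply convexOn_of_deriv2_nonneg' (convex_Icc 0 1)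
      · exact fun z _ => (phi_hasDeriv d K hKd z).differentiableAt.differentiableWithinAt
      · rw [hd1]
        exact fun z _ => (phi_deriv2 d K hK hlt z).differentiableAt.differentiableWithinAt
      · intro x hx
        simp only [Function.iterate_succ, Function.iterate_zero, Function.comp_apply, id_eq]
        rw [hd1, (phi_deriv2 d K hK hlt x).deriv]
        have h1 : (0:ℝ) ≤ x := hx.1
        have h2 : (0:ℝ) ≤ 1 - x := by linarith [hx.2]
        have h3 : (1:ℝ) ≤ (d:ℝ) := by exact_mod_cast Nat.one_le_cast.mpr (by omega)
        have := Nat.cast_nonneg (α := ℝ) ((d-2).choose (K-1))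
        apply mul_nonneg
        apply mul_nonneg
        apply mul_nonneg
        apply mul_nonneg
        · linarith
        · linarith
        · exact this
        · positivity
        · positivity
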